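/- Let α ∈ A^+ be self-overlap free, let ◊ be a new symbol, A_◊ = A ∪ {◊}, and let σ_◊ : A_◊* → A* be the monoid homomorphism fixing each a ∈ A and sending ◊ to α. Then for every word u ∈ A*, there is exactly one word u_◊ ∈ A_◊* such that u_◊ does not contain α as a factor and σ_◊(u_◊) = u. -/

import Mathlib

def SelfOverlapFree {A : Type*} (w : List A) : Prop :=
  ∀ p : List A, p ≠ [] → p.length < w.length → p <+: w → ¬ p <:+ w

def IsFactor {A : Type*} (α w : List A) : Prop :=
  ∃ x y : List A, w = x ++ α ++ y

/-- The homomorphism `σ_◊ : A_◊* → A*` fixing letters of `A` and sending the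
new symbol `◊` (modelled as `none`) to `α`. -/
def sigmaDiamond {A : Type*} (α : List A) (w : List (Option A)) : List A :=
  w.flatMap fun o => o.elim α fun a => [a]

section Aux

variable {A : Type*} {α : List A}

lemma sigma_cons (o : Option A) (w : List (Option A)) :
    sigmaDiamond α (o :: w) = (o.elim α fun a => [a]) ++ sigmaDiamond α w := rfl

lemma sigma_append (x y : List (Option A)) :
    sigmaDiamond α (x ++ y) = sigmaDiamond α x ++ sigmaDiamond α y :=
  List.flatMap_append

lemma sigma_map_some (l : List A) : sigmaDiamond α (l.map some) = l := by
  induction l with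
  | nil => rfl
  | cons a t ih => simp [sigma_cons, ih]

lemma sigma_eq_nil (hne : α ≠ []) {w : List (Option A)}
    (h : sigmaDiamond α w = []) : w = [] := by
  cases w with
  | nil => rfl
  | cons o t =>
    rw [sigma_cons, List.append_eq_nil_iff] at h
    cases o with
    | none => exact absurd h.1 hne
    | some a => simp at h

lemma factor_cons {B : Type*} {β : List B} {o : B} {w : List B}
    (h : IsFactor β (o :: w)) : β <+: o :: w ∨ IsFactor β w := by
  obtain ⟨x, y, hxy⟩ := h
  cases x with
  | nil => exact Or.inl ⟨y, by simpa using hxy.symm⟩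
  | cons c x' =>
    right
    refine ⟨x', y, ?_⟩
    simp only [List.cons_append] at hxy
    exact (List.cons.injEq _ _ _ _ ▸ hxy).2

lemma factor_of_cons {B : Type*} {β : List B} {o : B} {w : List B}
    (h : IsFactor β w) : IsFactor β (o :: w) := by
  obtain ⟨x, y, rfl⟩ := h
  exact ⟨o :: x, y, rfl⟩

lemma not_factor_nil (hne : α ≠ []) : ¬ IsFactor (α.map some) ([] : List (Option A)) := by
  rintro ⟨x, y, hxy⟩
  have h := congrArg List.length hxy
  simp at h
  have := List.length_pos_iff.mpr hne
  omega

/-- Decomposition of a word over `A_◊` into its maximal `some`-prefix and the rest. -/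
lemma decomp (w : List (Option A)) :
    ∃ (p : List A) (r : List (Option A)), w = p.map some ++ r ∧
      (r = [] ∨ ∃ r', r = none :: r') := by
  induction w with
  | nil => exact ⟨[], [], rfl, Or.inl rfl⟩
  | cons o t ih =>
    cases o with
    | none => exact ⟨[], none :: t, rfl, Or.inr ⟨t, rfl⟩⟩
    | some a =>
      obtain ⟨p, r, rfl, hr⟩ := ih
      exact ⟨a :: p, r, rfl, hr⟩

/-- Key lemma: if `w` has no `α`-factor but `σ w` starts with `α`, then `w` starts
with the diamond. -/
lemma key (hne : α ≠ []) (hsof : SelfOverlapFree α) (w : List (Option A))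
    (hfac : ¬ IsFactor (α.map some) w) (hpre : α <+: sigmaDiamond α w) :
    ∃ w', w = none :: w' := by
  obtain ⟨p, r, rfl, hr⟩ := decomp w
  rcases hr with rfl | ⟨r', rfl⟩
  · -- w = p.map some; then α is a prefix of p, giving a factor
    rw [List.append_nil] at hfac hpre ⊢
    rw [sigma_map_some] at hpre
    obtain ⟨p', rfl⟩ := hpre
    exact absurd ⟨[], p'.map some, by simp⟩ hfac
  · have hσ : sigmaDiamond α (p.map some ++ none :: r')
        = p ++ (α ++ sigmaDiamond α r') := by
      rw [sigma_append, sigma_map_some, sigma_cons]; rfl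
    rcases eq_or_ne p [] with rfl | hp
    · exact ⟨r', rfl⟩
    exfalso
    have hppre : p <+: sigmaDiamond α (p.map some ++ none :: r') :=
      hσ ▸ ⟨α ++ sigmaDiamond α r', rfl⟩
    by_cases hlen : α.length ≤ p.length
    · have : α <+: p := List.prefix_of_prefix_length_le hpre hppre hlen
      obtain ⟨p'', rfl⟩ := this
      exact hfac ⟨[], p''.map some ++ none :: r', by simp⟩
    · push_neg at hlen
      have hpα : p <+: α := List.prefix_of_prefix_length_le hppre hpre hlen.le
      obtain ⟨q, hq⟩ := hpα
      have hlq := congrArg List.length hq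
      simp only [List.length_append] at hlq
      have hppos : 0 < p.length := List.length_pos_iff.mpr hp
      have hqne : q ≠ [] := by
        intro h
        rw [h] at hlq
        simp at hlq
        omega
      obtain ⟨t, ht⟩ := hpre
      have h1 : p ++ (α ++ sigmaDiamond α r') = p ++ (q ++ t) := by
        rw [← hσ, ← ht, ← hq, List.append_assoc]
      have h2 : α ++ sigmaDiamond α r' = q ++ t := List.append_cancel_left h1
      have hqlen : q.length < α.length := by omega
      have hqpre : q <+: α :=
        List.prefix_of_prefix_length_le ⟨t, h2.symm⟩ ⟨sigmaDiamond α r', rfl⟩ hqlen.le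
      exact hsof q hqne hqlen hqpre ⟨p, hq⟩

lemma exist_lift (hne : α ≠ []) :
    ∀ (n : ℕ) (u : List A), u.length ≤ n →
      ∃ w, ¬ IsFactor (α.map some) w ∧ sigmaDiamond α w = u := by
  intro n
  induction n with
  | zero =>
    intro u hu
    rw [List.length_eq_zero_iff.mp (Nat.le_zero.mp hu)]
    exact ⟨[], not_factor_nil hne, rfl⟩
  | succ n ih =>
    intro u hu
    by_cases hα : α <+: u
    · obtain ⟨v, rfl⟩ := hα
      have hαpos : 0 < α.length := List.length_pos_iff.mpr hne
      have hv : v.length ≤ n := by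
        rw [List.length_append] at hu; omega
      obtain ⟨w, hw1, hw2⟩ := ih v hv
      refine ⟨none :: w, ?_, by rw [sigma_cons, hw2]; rfl⟩
      intro h
      rcases factor_cons h with hpre | hfac
      · rcases α with _ | ⟨a, s⟩
        · exact hne rfl
        · obtain ⟨y, hy⟩ := hpre
          simp at hy
      · exact hw1 hfac
    · cases u with
      | nil => exact ⟨[], not_factor_nil hne, rfl⟩
      | cons a u' =>
        have hu' : u'.length ≤ n := by simp at hu; omega
        obtain ⟨w, hw1, hw2⟩ := ih u' hu'
        refine ⟨some a :: w, ?_, by rw [sigma_cons, hw2]; rfl⟩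
        intro h
        rcases factor_cons h with hpre | hfac
        · obtain ⟨y, hy⟩ := hpre
          apply hα
          have : sigmaDiamond α (some a :: w) = a :: u' := by
            rw [sigma_cons, hw2]; rfl
          rw [← this, ← hy, sigma_append, sigma_map_some]
          exact ⟨sigmaDiamond α y, rfl⟩
        · exact hw1 hfac

lemma uniq_lift (hne : α ≠ []) (hsof : SelfOverlapFree α) :
    ∀ (w₁ w₂ : List (Option A)), ¬ IsFactor (α.map some) w₁ →
      ¬ IsFactor (α.map some) w₂ → sigmaDiamond α w₁ = sigmaDiamond α w₂ →
      w₁ = w₂ := by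
  intro w₁
  induction w₁ with
  | nil =>
    intro w₂ _ _ hσ
    exact (sigma_eq_nil hne hσ.symm).symm
  | cons o t ih =>
    intro w₂ h1 h2 hσ
    cases w₂ with
    | nil =>
      exact absurd (sigma_eq_nil hne hσ) (by simp)
    | cons o₂ t₂ =>
      have h1' : ¬ IsFactor (α.map some) t := fun h => h1 (factor_of_cons h)
      have h2' : ¬ IsFactor (α.map some) t₂ := fun h => h2 (factor_of_cons h)
      cases o with
      | none =>
        cases o₂ with
        | none =>
          rw [sigma_cons, sigma_cons] at hσ
          have := List.append_cancel_left hσ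
          rw [ih t₂ h1' h2' this]
        | some b =>
          exfalso
          have : α <+: sigmaDiamond α (some b :: t₂) := by
            rw [← hσ, sigma_cons]
            exact ⟨sigmaDiamond α t, rfl⟩
          obtain ⟨w', hw'⟩ := key hne hsof _ h2 this
          simp at hw'
      | some a =>
        cases o₂ with
        | none =>
          exfalso
          have : α <+: sigmaDiamond α (some a :: t) := by
            rw [hσ, sigma_cons]
            exact ⟨sigmaDiamond α t₂, rfl⟩
          obtain ⟨w', hw'⟩ := key hne hsof _ h1 this
          simp at hw'
        | some b =>
          rw [sigma_cons, sigma_cons] at hσ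
          simp only [Option.elim, List.singleton_append, List.cons.injEq] at hσ
          obtain ⟨rfl, htt⟩ := hσ
          rw [ih t₂ h1' h2' htt]

end Aux

theorem unique_diamond_lift {A : Type*} (α : List A) (hne : α ≠ [])
    (hsof : SelfOverlapFree α) (u : List A) :
    ∃! w : List (Option A),
      ¬ IsFactor (α.map some) w ∧ sigmaDiamond α w = u := by
  obtain ⟨w, hw1, hw2⟩ := exist_lift hne u.length u le_rfl
  refine ⟨w, ⟨hw1, hw2⟩, ?_⟩
  rintro w' ⟨hw'1, hw'2⟩
  exact uniq_lift hne hsof w' w hw'1 hw1 (hw'2.trans hw2.symm)
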